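/- Let d ≥ 1, n = (n₁,…,n_d), and let J = {a ∈ [n₁]×⋯×[n_d] : at most one coordinate a_i ≠ 1} \ {(1,…,1,n_d)}. Let I₂ be the ideal generated by Σ_a x_a² − 1 and the rank-one binomials x_a x_b − x_{a∨b} x_{a∧b}. Then I₂ ∩ ℝ[x_a : a ∈ J] = {0}; i.e., J is algebraically independent with respect to I₂, and |J| = Σᵢ nᵢ − d. -/

import Mathlib

lemma aux_supported_eval {σ : Type*} {J : Set σ} {f : MvPolynomial σ ℝ}
    (hf : f ∈ MvPolynomial.supported ℝ J) {x y : σ → ℝ} (hxy : ∀ a ∈ J, x a = y a) :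
    MvPolynomial.eval x f = MvPolynomial.eval y f := by
  rw [MvPolynomial.supported_eq_range_rename] at hf
  obtain ⟨g, rfl⟩ := hf
  simp only [AlgHom.toRingHom_eq_coe, RingHom.coe_coe, MvPolynomial.eval_rename]
  have h : x ∘ (Subtype.val : J → σ) = y ∘ Subtype.val := funext fun a => hxy a a.2
  rw [h]

lemma aux_rankone {d : ℕ} {n : Fin d → ℕ} (t : (i : Fin d) → Fin (n i) → ℝ)
    (a b : (i : Fin d) → Fin (n i)) :
    (∏ i, t i ((a ⊔ b) i)) * ∏ i, t i ((a ⊓ b) i) = (∏ i, t i (a i)) * ∏ i, t i (b i) := by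
  rw [← Finset.prod_mul_distrib, ← Finset.prod_mul_distrib]
  refine Finset.prod_congr rfl fun i _ => ?_
  rcases le_total (a i) (b i) with h | h
  · rw [Pi.sup_apply, Pi.inf_apply, sup_eq_right.mpr h, inf_eq_left.mpr h, mul_comm]
  · rw [Pi.sup_apply, Pi.inf_apply, sup_eq_left.mpr h, inf_eq_right.mpr h]

lemma aux_sum_sq {d : ℕ} {n : Fin d → ℕ} (t : (i : Fin d) → Fin (n i) → ℝ) :
    ∑ a : (i : Fin d) → Fin (n i), (∏ i, t i (a i))^2 = ∏ i, ∑ j, (t i j)^2 := by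
  rw [Finset.prod_univ_sum (fun i => Finset.univ) (fun i j => (t i j)^2),
    Fintype.piFinset_univ]
  exact Finset.sum_congr rfl fun a _ => by rw [← Finset.prod_pow]

lemma aux_analytic {σ : Type*} [Fintype σ] (p : MvPolynomial σ ℝ) :
    AnalyticOnNhd ℝ (fun x : σ → ℝ => MvPolynomial.eval x p) Set.univ := by
  induction p using MvPolynomial.induction_on with
  | C a => simp only [MvPolynomial.eval_C]; exact fun x _ => analyticAt_const
  | add p q hp hq =>
      simp only [map_add]; exact fun x hx => (hp x hx).add (hq x hx)
  | mul_X p i hp =>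
      simp only [map_mul, MvPolynomial.eval_X]
      exact fun x hx => (hp x hx).mul ((ContinuousLinearMap.proj i :
        (σ → ℝ) →L[ℝ] ℝ).analyticAt x)

lemma aux_zero {σ : Type*} [Fintype σ] {p : MvPolynomial σ ℝ} {U : Set (σ → ℝ)}
    (hU : IsOpen U) (hne : U.Nonempty) (h : ∀ x ∈ U, MvPolynomial.eval x p = 0) : p = 0 := by
  obtain ⟨x₀, hx₀⟩ := hne
  have h2 := (aux_analytic p).eqOn_zero_of_preconnected_of_eventuallyEq_zero
    isPreconnected_univ (Set.mem_univ x₀)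
    (Filter.eventuallyEq_of_mem (hU.mem_nhds hx₀) (fun x hx => h x hx))
  exact MvPolynomial.funext fun x => by simpa using h2 (Set.mem_univ x)

lemma exists_section {d : ℕ} (hd : 0 < d) (n : Fin d → ℕ) (hn : ∀ i, 0 < n i)
    (c : (i : Fin d) → Fin (n i))
    (hc : c = fun i => if i = (⟨d - 1, Nat.sub_lt hd Nat.one_pos⟩ : Fin d) then
      (⟨n i - 1, Nat.sub_lt (hn i) Nat.one_pos⟩ : Fin (n i)) else (⟨0, hn i⟩ : Fin (n i))) :
    ∃ U : Set (((i : Fin d) → Fin (n i)) → ℝ), IsOpen U ∧ U.Nonempty ∧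
      ∀ x ∈ U, ∃ t : (i : Fin d) → Fin (n i) → ℝ,
        (∀ a, {i : Fin d | a i ≠ (⟨0, hn i⟩ : Fin (n i))}.Subsingleton → a ≠ c →
          ∏ i, t i (a i) = x a) ∧ (∏ i, ∑ j, (t i j)^2) = 1 := by
  classical
  set l : Fin d := ⟨d - 1, Nat.sub_lt hd Nat.one_pos⟩ with hl
  set z0 : (i : Fin d) → Fin (n i) := fun i => ⟨0, hn i⟩ with hz0
  set sgl : (k : Fin d) → Fin (n k) → ((i : Fin d) → Fin (n i)) :=
    fun k j => Function.update z0 k j with hsgl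
  have hsgl_self : ∀ (k : Fin d) (j : Fin (n k)), sgl k j k = j := by
    intro k j; simp only [hsgl]; rw [Function.update_self]
  have hsgl_noteq : ∀ (k : Fin d) (j : Fin (n k)) (i : Fin d), i ≠ k → sgl k j i = z0 i := by
    intro k j i hik; simp only [hsgl]; rw [Function.update_of_ne hik]
  -- decomposition of elements with subsingleton support
  have hdecomp : ∀ a : (i : Fin d) → Fin (n i),
      {i : Fin d | a i ≠ (⟨0, hn i⟩ : Fin (n i))}.Subsingleton →
      a = z0 ∨ ∃ k, a k ≠ z0 k ∧ a = sgl k (a k) := by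
    intro a ha
    by_cases h : ∀ i, a i = z0 i
    · exact Or.inl (funext h)
    · push_neg at h
      obtain ⟨k, hk⟩ := h
      refine Or.inr ⟨k, hk, funext fun i => ?_⟩
      rcases eq_or_ne i k with rfl | hik
      · rw [hsgl_self]
      · rw [hsgl_noteq _ _ _ hik]
        by_contra hne
        exact hik (ha hne hk)
  have hc_sgl : c = sgl l (c l) := by
    funext i
    rcases eq_or_ne i l with rfl | h
    · rw [hsgl_self]
    · rw [hsgl_noteq _ _ _ h, hc]
      simp [h, hz0]
  -- sum over Fin (n k) minus zero
  set s : (k : Fin d) → (((i : Fin d) → Fin (n i)) → ℝ) → ℝ :=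
    fun k x => ∑ j ∈ Finset.univ.erase (⟨0, hn k⟩ : Fin (n k)), (x (sgl k j))^2 with hs
  have hs_cont : ∀ k, Continuous (s k) := fun k =>
    continuous_finset_sum _ fun j _ => (continuous_apply (sgl k j)).pow 2
  have hs_nonneg : ∀ k x, 0 ≤ s k x := fun k x =>
    Finset.sum_nonneg fun j _ => sq_nonneg _
  rcases eq_or_lt_of_le (show 1 ≤ n l from hn l) with hB | hA
  · -- Case B : n l = 1, c = z0
    have hnl : n l = 1 := hB.symm
    have hcz0 : c = z0 := by
      funext i
      rcases eq_or_ne i l with rfl | h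
      · rw [hc]; simp only [if_pos rfl]
        exact Fin.ext (by omega)
      · rw [hc]; simp [h, hz0]
    set δ : ℝ := (3/4 : ℝ)^(2*d) / 16 with hδ
    have hδpos : 0 < δ := by positivity
    refine ⟨{x | ∀ k, s k x < δ}, ?_, ⟨0, fun k => by simpa [hs] using hδpos⟩, ?_⟩
    · have he : {x : ((i : Fin d) → Fin (n i)) → ℝ | ∀ k, s k x < δ} =
          ⋂ k, {x | s k x < δ} := by ext x; simp
      rw [he]
      exact isOpen_iInter_of_finite fun k => isOpen_lt (hs_cont k) continuous_const
    · intro x hx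
      -- find the scaling r via IVT
      set F : ℝ → ℝ := fun r => ∏ i, (r^2 + s i x / (r^(d-1))^2) with hF
      have hFcont : ContinuousOn F (Set.Icc (3/4 : ℝ) 1) := by
        apply continuousOn_finset_prod
        intro i _
        refine ContinuousOn.add (continuousOn_id.pow 2) ?_
        refine ContinuousOn.div continuousOn_const ((continuousOn_id.pow (d-1)).pow 2) ?_
        intro r hr
        have : (0:ℝ) < r := lt_of_lt_of_le (by norm_num) hr.1
        positivity
      have hF34 : F (3/4) ≤ (10/16 : ℝ)^d := by
        show (∏ i : Fin d, (((3:ℝ)/4)^2 + s i x / (((3:ℝ)/4)^(d-1))^2)) ≤ (10/16 : ℝ)^d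
        calc ∏ i : Fin d, (((3:ℝ)/4)^2 + s i x / (((3:ℝ)/4)^(d-1))^2)
            ≤ ∏ _i : Fin d, (10/16 : ℝ) := by
              apply Finset.prod_le_prod
              · intro i _
                have := hs_nonneg i x
                positivity
              · intro i _
                have h1 : s i x < δ := hx i
                have h2 : (((3:ℝ)/4)^(d-1))^2 = (3/4:ℝ)^(2*(d-1)) := by
                  rw [← pow_mul]; ring_nf
                have h3 : (3/4:ℝ)^(2*d) ≤ (3/4:ℝ)^(2*(d-1)) :=
                  pow_le_pow_of_le_one (by norm_num) (by norm_num) (by omega)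
                have h4 : s i x / (((3:ℝ)/4)^(d-1))^2 ≤ 1/16 := by
                  rw [h2, div_le_iff₀ (by positivity)]
                  calc s i x ≤ δ := (hx i).le
                    _ = (3/4:ℝ)^(2*d) * (1/16) := by rw [hδ]; ring
                    _ ≤ (3/4:ℝ)^(2*(d-1)) * (1/16) := by nlinarith
                    _ = 1/16 * (3/4:ℝ)^(2*(d-1)) := by ring
                nlinarith
          _ = (10/16 : ℝ)^d := by simp [div_pow]
      have hF34' : F (3/4) ≤ 1 := hF34.trans (pow_le_one₀ (by norm_num) (by norm_num))
      have hF1 : 1 ≤ F 1 := by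
        show (1:ℝ) ≤ ∏ i : Fin d, ((1:ℝ)^2 + s i x / ((1:ℝ)^(d-1))^2)
        calc (1:ℝ) = ∏ _i : Fin d, (1:ℝ) := by simp
          _ ≤ ∏ i : Fin d, ((1:ℝ)^2 + s i x / ((1:ℝ)^(d-1))^2) := by
              refine Finset.prod_le_prod (fun i _ => by norm_num) (fun i _ => ?_)
              have := hs_nonneg i x
              simp only [one_pow]
              nlinarith
      have hmem : (1:ℝ) ∈ Set.Icc (F (3/4)) (F 1) := ⟨hF34', hF1⟩
      obtain ⟨r, hrIcc, hFr⟩ := intermediate_value_Icc (by norm_num : (3/4:ℝ) ≤ 1) hFcont hmem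
      have hr0 : (0:ℝ) < r := lt_of_lt_of_le (by norm_num) hrIcc.1
      set t : (i : Fin d) → Fin (n i) → ℝ := fun i j =>
        if j = (⟨0, hn i⟩ : Fin (n i)) then r else x (sgl i j) / r^(d-1) with ht
      refine ⟨t, ?_, ?_⟩
      · intro a hasub hane
        rcases hdecomp a hasub with rfl | ⟨k, hk, hak⟩
        · exact absurd hcz0.symm hane
        · rw [← Finset.mul_prod_erase Finset.univ _ (Finset.mem_univ k)]
          have h1 : t k (a k) = x a / r^(d-1) := by
            simp only [ht, if_neg (show a k ≠ (⟨0, hn k⟩ : Fin (n k)) from hk)]; rw [← hak]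
          have h2 : ∏ i ∈ Finset.univ.erase k, t i (a i) = r^(d-1) := by
            rw [Finset.prod_congr rfl (fun i hi => ?_), Finset.prod_const,
              Finset.card_erase_of_mem (Finset.mem_univ k), Finset.card_univ,
              Fintype.card_fin]
            have hik : i ≠ k := Finset.ne_of_mem_erase hi
            have hai : a i = z0 i := by rw [hak, hsgl_noteq _ _ _ hik]
            rw [hai]
            simp only [ht, hz0, if_pos rfl]
          rw [h1, h2, div_mul_cancel₀]
          positivity
      · have hsum : ∀ i, ∑ j, (t i j)^2 = r^2 + s i x / (r^(d-1))^2 := by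
          intro i
          have h1 : ∀ j ∈ Finset.univ.erase (⟨0, hn i⟩ : Fin (n i)),
              (t i j)^2 = (x (sgl i j))^2 / (r^(d-1))^2 := by
            intro j hj
            simp only [ht, if_neg (Finset.ne_of_mem_erase hj), div_pow]
          rw [← Finset.add_sum_erase _ (fun j => (t i j)^2)
              (Finset.mem_univ (⟨0, hn i⟩ : Fin (n i))),
            Finset.sum_congr rfl h1, ← Finset.sum_div]
          simp only [ht, if_pos rfl, hs]
        rw [Finset.prod_congr rfl (fun i _ => hsum i)]
        exact hFr
  · -- Case A : 1 < n l
    have hclv : ((c l : Fin (n l)) : ℕ) = n l - 1 := by rw [hc]; simp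
    have hcl : c l ≠ (⟨0, hn l⟩ : Fin (n l)) := by
      intro h
      rw [h] at hclv
      simp only [Fin.val_mk] at hclv
      omega
    set P : (((i : Fin d) → Fin (n i)) → ℝ) → ℝ :=
      fun x => ∏ k ∈ Finset.univ.erase l, (1 + s k x / (x z0)^2) with hP
    set s' : (((i : Fin d) → Fin (n i)) → ℝ) → ℝ :=
      fun x => ∑ j ∈ (Finset.univ.erase (⟨0, hn l⟩ : Fin (n l))).erase (c l),
        (x (sgl l j))^2 with hs'
    set al : (((i : Fin d) → Fin (n i)) → ℝ) → ℝ :=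
      fun x => (P x)⁻¹ - (x z0)^2 - s' x with hal
    set V : Set (((i : Fin d) → Fin (n i)) → ℝ) := {x | x z0 ≠ 0} with hV
    have hVopen : IsOpen V := isOpen_ne_fun (continuous_apply z0) continuous_const
    have hPpos : ∀ x ∈ V, 0 < P x := by
      intro x hx
      refine Finset.prod_pos fun k _ => ?_
      have h1 : 0 < (x z0)^2 := lt_of_le_of_ne (sq_nonneg _) (Ne.symm (pow_ne_zero 2 hx))
      have h2 : 0 ≤ s k x / (x z0)^2 := div_nonneg (hs_nonneg k x) h1.le
      linarith
    have hal_cont : ContinuousOn al V := by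
      have hPcont : ContinuousOn P V := by
        apply continuousOn_finset_prod
        intro k _
        refine ContinuousOn.add continuousOn_const ?_
        exact ContinuousOn.div (hs_cont k).continuousOn
          ((continuous_apply z0).pow 2).continuousOn
          (fun x hx => pow_ne_zero 2 hx)
      refine ContinuousOn.sub (ContinuousOn.sub ?_ ?_) ?_
      · exact ContinuousOn.inv₀ hPcont fun x hx => (hPpos x hx).ne'
      · exact ((continuous_apply z0).pow 2).continuousOn
      · exact Continuous.continuousOn
          (continuous_finset_sum _ fun j _ => (continuous_apply (sgl l j)).pow 2)
    refine ⟨V ∩ al ⁻¹' Set.Ioi 0, hal_cont.isOpen_inter_preimage hVopen isOpen_Ioi, ?_, ?_⟩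
    · -- nonempty : witness
      set x₀ : (((i : Fin d) → Fin (n i)) → ℝ) := fun a => if a = z0 then (1/2 : ℝ) else 0
        with hx₀
      have hx₀z0 : x₀ z0 = 1/2 := by simp [hx₀]
      have hx₀s : ∀ k, s k x₀ = 0 := by
        intro k
        refine Finset.sum_eq_zero fun j hj => ?_
        have : sgl k j ≠ z0 := by
          intro h
          exact (Finset.ne_of_mem_erase hj) (by rw [← hsgl_self k j, h])
        simp [hx₀, this]
      have hx₀P : P x₀ = 1 := by
        simp only [hP]
        refine Finset.prod_eq_one fun k _ => ?_
        rw [hx₀s k]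
        simp
      have hx₀s' : s' x₀ = 0 := by
        simp only [hs']
        refine Finset.sum_eq_zero fun j hj => ?_
        have hj0 : j ≠ (⟨0, hn l⟩ : Fin (n l)) :=
          Finset.ne_of_mem_erase (Finset.mem_of_mem_erase hj)
        have hne : sgl l j ≠ z0 := fun h => hj0 (by rw [← hsgl_self l j, h])
        simp [hx₀, hne]
      refine ⟨x₀, ?_, ?_⟩
      · show x₀ z0 ≠ 0
        rw [hx₀z0]; norm_num
      · show 0 < al x₀
        simp only [hal]
        rw [hx₀P, hx₀z0, hx₀s']
        norm_num
    · intro x hx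
      obtain ⟨hxV, hxal⟩ := hx
      have hu : x z0 ≠ 0 := hxV
      have hu2 : (0:ℝ) < (x z0)^2 := lt_of_le_of_ne (sq_nonneg _) (Ne.symm (pow_ne_zero 2 hu))
      have halx : 0 < al x := hxal
      set w : ℝ := Real.sqrt (al x) with hw
      set t : (i : Fin d) → Fin (n i) → ℝ := fun i j =>
        if i = l then
          (if j = (⟨0, hn i⟩ : Fin (n i)) then x z0 else if j = c i then w else x (sgl i j))
        else (if j = (⟨0, hn i⟩ : Fin (n i)) then (1:ℝ) else x (sgl i j) / x z0) with ht
      have ht_l0 : t l (⟨0, hn l⟩ : Fin (n l)) = x z0 := by simp [ht]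
      have ht_i0 : ∀ i, i ≠ l → t i (⟨0, hn i⟩ : Fin (n i)) = 1 := by
        intro i hi; simp [ht, hi]
      refine ⟨t, ?_, ?_⟩
      · -- coordinates match on J
        intro a hasub hane
        rcases hdecomp a hasub with rfl | ⟨k, hk, hak⟩
        · -- a = z0
          rw [← Finset.mul_prod_erase Finset.univ _ (Finset.mem_univ l)]
          have h2 : ∏ i ∈ Finset.univ.erase l, t i (z0 i) = 1 :=
            Finset.prod_eq_one fun i hi => ht_i0 i (Finset.ne_of_mem_erase hi)
          rw [h2, ht_l0, mul_one]
        · rcases eq_or_ne k l with rfl | hkl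
          · -- k = l
            rw [← Finset.mul_prod_erase Finset.univ _ (Finset.mem_univ l)]
            have h2 : ∏ i ∈ Finset.univ.erase l, t i (a i) = 1 := by
              refine Finset.prod_eq_one fun i hi => ?_
              have hik : i ≠ l := Finset.ne_of_mem_erase hi
              rw [hak, hsgl_noteq _ _ _ hik]
              exact ht_i0 i hik
            have hacl : a l ≠ c l := by
              intro h
              exact hane (by rw [hak, h, ← hc_sgl])
            have h1 : t l (a l) = x a := by
              simp only [ht, if_pos rfl, if_neg (show a l ≠ (⟨0, hn l⟩ : Fin (n l)) from hk), if_neg hacl]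
              rw [← hak]
            rw [h1, h2, mul_one]
          · -- k ≠ l
            rw [← Finset.mul_prod_erase Finset.univ _ (Finset.mem_univ k)]
            have hlk : l ∈ Finset.univ.erase k :=
              Finset.mem_erase.mpr ⟨Ne.symm hkl, Finset.mem_univ l⟩
            rw [← Finset.mul_prod_erase _ _ hlk]
            have hal0 : a l = z0 l := by rw [hak, hsgl_noteq _ _ _ (Ne.symm hkl)]
            have h3 : ∏ i ∈ (Finset.univ.erase k).erase l, t i (a i) = 1 := by
              refine Finset.prod_eq_one fun i hi => ?_
              have hil : i ≠ l := Finset.ne_of_mem_erase hi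
              have hik : i ≠ k := Finset.ne_of_mem_erase (Finset.mem_of_mem_erase hi)
              rw [hak, hsgl_noteq _ _ _ hik]
              exact ht_i0 i hil
            have h1 : t k (a k) = x a / x z0 := by
              simp only [ht, if_neg hkl, if_neg (show a k ≠ (⟨0, hn k⟩ : Fin (n k)) from hk)]
              rw [← hak]
            have h2 : t l (a l) = x z0 := by rw [hal0]; exact ht_l0
            rw [h1, h2, h3, mul_one, div_mul_cancel₀ _ hu]
      · -- normalization
        have hsum_ne : ∀ i, i ≠ l → ∑ j, (t i j)^2 = 1 + s i x / (x z0)^2 := by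
          intro i hi
          have h1 : ∀ j ∈ Finset.univ.erase (⟨0, hn i⟩ : Fin (n i)),
              (t i j)^2 = (x (sgl i j))^2 / (x z0)^2 := by
            intro j hj
            simp only [ht, if_neg hi, if_neg (Finset.ne_of_mem_erase hj), div_pow]
          rw [← Finset.add_sum_erase _ (fun j => (t i j)^2)
              (Finset.mem_univ (⟨0, hn i⟩ : Fin (n i))),
            Finset.sum_congr rfl h1, ← Finset.sum_div, ht_i0 i hi]
          simp only [hs, one_pow]
        have hsum_l : ∑ j, (t l j)^2 = (P x)⁻¹ := by
          have hclm : c l ∈ Finset.univ.erase (⟨0, hn l⟩ : Fin (n l)) :=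
            Finset.mem_erase.mpr ⟨hcl, Finset.mem_univ _⟩
          have h1 : ∀ j ∈ (Finset.univ.erase (⟨0, hn l⟩ : Fin (n l))).erase (c l),
              (t l j)^2 = (x (sgl l j))^2 := by
            intro j hj
            simp only [ht, if_pos rfl, if_neg (Finset.ne_of_mem_erase (Finset.mem_of_mem_erase hj)),
              if_neg (Finset.ne_of_mem_erase hj)]
          have h2 : (t l (c l))^2 = al x := by
            simp only [ht, if_pos rfl, if_neg hcl]
            exact Real.sq_sqrt halx.le
          rw [← Finset.add_sum_erase _ (fun j => (t l j)^2)
              (Finset.mem_univ (⟨0, hn l⟩ : Fin (n l))),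
            ← Finset.add_sum_erase _ (fun j => (t l j)^2) hclm,
            Finset.sum_congr rfl h1, h2, ht_l0]
          simp only [hal, hs']
          ring
        rw [← Finset.mul_prod_erase Finset.univ _ (Finset.mem_univ l), hsum_l,
          Finset.prod_congr rfl (fun i hi => hsum_ne i (Finset.ne_of_mem_erase hi))]
        simp only [hP]
        rw [inv_mul_cancel₀ (hPpos x hxV).ne']

lemma card_J {d : ℕ} (hd : 0 < d) (n : Fin d → ℕ) (hn : ∀ i, 0 < n i)
    (c : (i : Fin d) → Fin (n i))
    (hc : c = fun i => if i = (⟨d - 1, Nat.sub_lt hd Nat.one_pos⟩ : Fin d) then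
      (⟨n i - 1, Nat.sub_lt (hn i) Nat.one_pos⟩ : Fin (n i)) else (⟨0, hn i⟩ : Fin (n i))) :
    ({a : (i : Fin d) → Fin (n i) |
        {i : Fin d | a i ≠ (⟨0, hn i⟩ : Fin (n i))}.Subsingleton} \ {c}).ncard
      = (∑ i, n i) - d := by
  classical
  set l : Fin d := ⟨d - 1, Nat.sub_lt hd Nat.one_pos⟩ with hl
  set z0 : (i : Fin d) → Fin (n i) := fun i => ⟨0, hn i⟩ with hz0
  set J' : Set ((i : Fin d) → Fin (n i)) :=
    {a | {i : Fin d | a i ≠ (⟨0, hn i⟩ : Fin (n i))}.Subsingleton} with hJ'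
  have hmem : ∀ (k : Fin d) (j : Fin (n k)), Function.update z0 k j ∈ J' := by
    intro k j
    intro i₁ h₁ i₂ h₂
    simp only [Set.mem_setOf_eq] at h₁ h₂
    by_contra hne
    rcases ne_or_eq i₁ k with h | h
    · exact h₁ (Function.update_of_ne h j z0)
    · subst h
      exact h₂ (Function.update_of_ne (fun hh => hne hh.symm) j z0)
  have hcJ' : c ∈ J' := by
    have : c = Function.update z0 l (c l) := by
      funext i
      rcases eq_or_ne i l with rfl | h
      · rw [Function.update_self]
      · rw [Function.update_of_ne h, hc]
        simp [h, hz0]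
    rw [this]; exact hmem l (c l)
  have hz0J' : z0 ∈ J' := by
    intro i₁ h₁ i₂ h₂
    simp only [Set.mem_setOf_eq, hz0, ne_eq, not_true_eq_false] at h₁
  have hfin : J'.Finite := Set.toFinite _
  -- the key bijection
  have key : (J' \ {z0}).ncard = ∑ i, (n i - 1) := by
    have hbij : Function.Bijective
        (fun p : (Σ k : Fin d, {j : Fin (n k) // j ≠ z0 k}) =>
          (⟨Function.update z0 p.1 p.2.1, by
            refine ⟨hmem p.1 p.2.1, ?_⟩
            simp only [Set.mem_singleton_iff]
            intro hf
            exact p.2.2 (by rw [← Function.update_self p.1 p.2.1 z0, hf])⟩ :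
            ↥(J' \ {z0}))) := by
      constructor
      · rintro ⟨k, j, hj⟩ ⟨k', j', hj'⟩ h
        have h : Function.update z0 k j = Function.update z0 k' j' := congrArg Subtype.val h
        rcases eq_or_ne k k' with rfl | hkk
        · have : j = j' := by
            have := congrFun h k
            rwa [Function.update_self, Function.update_self] at this
          subst this; rfl
        · exfalso
          have := congrFun h k
          rw [Function.update_self, Function.update_of_ne hkk] at this
          exact hj this
      · rintro ⟨a, haJ', ha⟩
        simp only [Set.mem_singleton_iff] at ha
        have hex : ∃ k, a k ≠ z0 k := by
          by_contra hno
          push_neg at hno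
          exact ha (funext fun i => hno i)
        obtain ⟨k, hk⟩ := hex
        refine ⟨⟨k, a k, hk⟩, ?_⟩
        apply Subtype.ext
        show Function.update z0 k (a k) = a
        funext i
        rcases eq_or_ne i k with rfl | h
        · rw [Function.update_self]
        · rw [Function.update_of_ne h]
          by_contra hne
          exact h (haJ' (Ne.symm hne) hk)
    have hcard := Nat.card_congr (Equiv.ofBijective _ hbij)
    rw [← Nat.card_coe_set_eq, ← hcard, Nat.card_eq_fintype_card, Fintype.card_sigma]
    refine Finset.sum_congr rfl fun k _ => ?_
    rw [Fintype.card_subtype_compl (p := fun j : Fin (n k) => j = z0 k),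
      Fintype.card_subtype_eq, Fintype.card_fin]
  have h1 : (J' \ {c}).ncard = J'.ncard - 1 := Set.ncard_diff_singleton_of_mem hcJ'
  have h2 : (J' \ {z0}).ncard = J'.ncard - 1 := Set.ncard_diff_singleton_of_mem hz0J'
  rw [h1, ← h2, key, Finset.sum_tsub_distrib _ (fun i _ => hn i)]
  congr 1
  simp

/-- Let `J` be the set of multi-indices with at most one coordinate `≠ 1`, minus the
index `(1,…,1,n_d)`, and let `I₂ = ⟨Σ x_a² − 1, rank-one binomials⟩`. Then
`I₂ ∩ ℝ[x_a : a ∈ J] = {0}` (i.e. `J` is algebraically independent with respect to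
`I₂`) and `|J| = Σᵢ nᵢ − d`. -/
theorem stmt_18 (d : ℕ) (hd : 0 < d) (n : Fin d → ℕ) (hn : ∀ i, 0 < n i)
    (c : (i : Fin d) → Fin (n i))
    (hc : c = fun i => if i = (⟨d - 1, Nat.sub_lt hd Nat.one_pos⟩ : Fin d) then
      (⟨n i - 1, Nat.sub_lt (hn i) Nat.one_pos⟩ : Fin (n i)) else (⟨0, hn i⟩ : Fin (n i)))
    (J : Set ((i : Fin d) → Fin (n i)))
    (hJ : J = {a | {i : Fin d | a i ≠ (⟨0, hn i⟩ : Fin (n i))}.Subsingleton} \ {c})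
    (I₂ : Ideal (MvPolynomial ((i : Fin d) → Fin (n i)) ℝ))
    (hI₂ : I₂ = Ideal.span
      ({(∑ a : (i : Fin d) → Fin (n i), (MvPolynomial.X a) ^ 2) - 1} ∪
       {p | ∃ a b : (i : Fin d) → Fin (n i),
        (∃ i, b i < a i) ∧ (∃ j, a j < b j) ∧
        p = MvPolynomial.X a * MvPolynomial.X b -
            MvPolynomial.X (a ⊔ b) * MvPolynomial.X (a ⊓ b)})) :
    (∀ f ∈ I₂, f ∈ MvPolynomial.supported ℝ J → f = 0) ∧
    J.ncard = (∑ i, n i) - d := by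
  constructor
  · intro f hf hfs
    obtain ⟨U, hUopen, hUne, hU⟩ := exists_section hd n hn c hc
    refine aux_zero hUopen hUne fun x hx => ?_
    obtain ⟨t, ht1, ht2⟩ := hU x hx
    set z : ((i : Fin d) → Fin (n i)) → ℝ := fun a => ∏ i, t i (a i) with hz
    have hker : I₂ ≤ RingHom.ker (MvPolynomial.eval z) := by
      rw [hI₂, Ideal.span_le]
      rintro p (hp | ⟨a, b, _, _, rfl⟩)
      · rw [Set.mem_singleton_iff] at hp
        subst hp
        rw [SetLike.mem_coe, RingHom.mem_ker, map_sub, map_sum, map_one]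
        simp only [map_pow, MvPolynomial.eval_X]
        rw [sub_eq_zero]
        calc (∑ a : (i : Fin d) → Fin (n i), (z a)^2)
            = ∏ i, ∑ j, (t i j)^2 := aux_sum_sq t
          _ = 1 := ht2
      · rw [SetLike.mem_coe, RingHom.mem_ker, map_sub, map_mul, map_mul]
        simp only [MvPolynomial.eval_X]
        rw [sub_eq_zero]
        exact ((aux_rankone t a b).symm)
    have hz0 : MvPolynomial.eval z f = 0 := hker hf
    have heq : MvPolynomial.eval x f = MvPolynomial.eval z f := by
      refine (aux_supported_eval hfs fun a ha => ?_).symm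
      rw [hJ] at ha
      exact ht1 a ha.1 ha.2
    rw [heq, hz0]
  · rw [hJ]
    exact card_J hd n hn c hc
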